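/- arXiv:1511.08552 — 6 statements merged into one kernel-verified Lean document; each statement's English description precedes it below -/
import Mathlib

section
/- The exponential mechanism is (ε,0)-differentially private: sampling an output f ∈ F with probability proportional to exp(ε·q(S,f)/(2Δq)) satisfies (ε,0)-differential privacy, where Δq is the sensitivity of q. -/
/-- Two databases are neighboring if they differ in at most one entry. -/
def NeighboringDB {X : Type*} {n : ℕ} (S S' : Fin n → X) : Prop :=
  ∃ i₀ : Fin n, ∀ i : Fin n, i ≠ i₀ → S i = S' i

/-- The exponential mechanism is `(ε,0)`-differentially private: if the quality
function `q` has sensitivity at most `Δ`, then for all neighboring databases `S, S'`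
and every output `f`, the probability that the exponential mechanism outputs `f` on
input `S` is at most `e^ε` times the probability that it outputs `f` on input `S'`. -/
theorem exponential_mechanism_private {X F : Type*} [Fintype F] [Nonempty F] {n : ℕ}
    (q : (Fin n → X) → F → ℝ) (ε Δ : ℝ) (hε : 0 ≤ ε) (hΔ : 0 < Δ)
    (hsens : ∀ f : F, ∀ S S' : Fin n → X, NeighboringDB S S' →
      |q S f - q S' f| ≤ Δ) :
    ∀ S S' : Fin n → X, NeighboringDB S S' → ∀ f : F,
      Real.exp (ε * q S f / (2 * Δ)) / (∑ g : F, Real.exp (ε * q S g / (2 * Δ))) ≤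
        Real.exp ε *
          (Real.exp (ε * q S' f / (2 * Δ)) /
            (∑ g : F, Real.exp (ε * q S' g / (2 * Δ)))) := by
  intro S S' hN f
  have hN' : NeighboringDB S' S := by
    obtain ⟨i₀, h⟩ := hN; exact ⟨i₀, fun i hi => (h i hi).symm⟩
  have hsum : ∀ T : Fin n → X, 0 < ∑ g : F, Real.exp (ε * q T g / (2 * Δ)) := fun T =>
    Finset.sum_pos (fun g _ => Real.exp_pos _) Finset.univ_nonempty
  -- numerator bound
  have key : ∀ g : F, Real.exp (ε * q S g / (2 * Δ)) ≤
      Real.exp (ε / 2) * Real.exp (ε * q S' g / (2 * Δ)) := by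
    intro g
    rw [← Real.exp_add]
    apply Real.exp_le_exp.mpr
    have h1 : q S g - q S' g ≤ Δ := (abs_le.mp (hsens g S S' hN)).2
    have : ε * q S g / (2 * Δ) - ε * q S' g / (2 * Δ) ≤ ε / 2 := by
      rw [div_sub_div_same, ← mul_sub]
      rw [div_le_div_iff₀ (by linarith) two_pos]
      nlinarith
    linarith
  have key' : ∀ g : F, Real.exp (ε * q S' g / (2 * Δ)) ≤
      Real.exp (ε / 2) * Real.exp (ε * q S g / (2 * Δ)) := by
    intro g
    rw [← Real.exp_add]
    apply Real.exp_le_exp.mpr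
    have h1 : q S' g - q S g ≤ Δ := (abs_le.mp (hsens g S' S hN')).2
    have : ε * q S' g / (2 * Δ) - ε * q S g / (2 * Δ) ≤ ε / 2 := by
      rw [div_sub_div_same, ← mul_sub]
      rw [div_le_div_iff₀ (by linarith) two_pos]
      nlinarith
    linarith
  have hden : ∑ g : F, Real.exp (ε * q S' g / (2 * Δ)) ≤
      Real.exp (ε / 2) * ∑ g : F, Real.exp (ε * q S g / (2 * Δ)) := by
    rw [Finset.mul_sum]
    exact Finset.sum_le_sum fun g _ => key' g
  have hnum := key f
  calc Real.exp (ε * q S f / (2 * Δ)) / (∑ g : F, Real.exp (ε * q S g / (2 * Δ)))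
      ≤ (Real.exp (ε / 2) * Real.exp (ε * q S' f / (2 * Δ))) /
        ((∑ g : F, Real.exp (ε * q S' g / (2 * Δ))) / Real.exp (ε / 2)) := by
        apply div_le_div₀ (by positivity) hnum (by positivity)
        rw [div_le_iff₀ (Real.exp_pos _)]
        linarith [hden]
      _ = Real.exp ε * (Real.exp (ε * q S' f / (2 * Δ)) /
            (∑ g : F, Real.exp (ε * q S' g / (2 * Δ)))) := by
        have he : Real.exp (ε / 2) * Real.exp (ε / 2) = Real.exp ε := by
          rw [← Real.exp_add]; norm_num
        rw [div_div_eq_mul_div, mul_right_comm, he, mul_div_assoc]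
end

section
/- Packing lower bound: if M : X^n → Y is (ε,0)-differentially private, and there exist N databases S_1,…,S_N ∈ X^n (each pair differing in at most n entries) and disjoint events T_1,…,T_N ⊆ Y such that Pr[M(S_i) ∈ T_i] ≥ 1/2 for all i, then n ≥ ln(N)/ε − ln(2)/ε. -/
/-- Packing lower bound: if `M` is `(ε,0)`-differentially private and there are `N`
databases of size `n` together with pairwise disjoint events `T i` such that
`Pr[M(S_i) ∈ T_i] ≥ 1/2` for all `i`, then `n ≥ ln(N)/ε − ln(2)/ε`. -/
theorem packing_lower_bound {X Y : Type*} {n N : ℕ}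
    (M : (Fin n → X) → PMF Y) (ε : ℝ) (hε : 0 < ε)
    (hDP : ∀ S S' : Fin n → X, (∃ i₀ : Fin n, ∀ i : Fin n, i ≠ i₀ → S i = S' i) →
      ∀ T : Set Y,
        (M S).toOuterMeasure T ≤ ENNReal.ofReal (Real.exp ε) * (M S').toOuterMeasure T)
    (S : Fin N → Fin n → X) (T : Fin N → Set Y)
    (hdisj : Pairwise (Function.onFun Disjoint T))
    (hacc : ∀ i : Fin N, (1 : ENNReal) / 2 ≤ (M (S i)).toOuterMeasure (T i)) :
    Real.log N / ε - Real.log 2 / ε ≤ (n : ℝ) := by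
  classical
  letI : MeasurableSpace Y := ⊤
  set e : ENNReal := ENNReal.ofReal (Real.exp ε) with he
  -- group privacy
  have hgroup : ∀ (A B : Fin n → X) (U : Set Y),
      (M A).toOuterMeasure U ≤ e ^ n * (M B).toOuterMeasure U := by
    intro A B U
    have key : ∀ k : ℕ, k ≤ n →
        (M A).toOuterMeasure U ≤ e ^ k *
          (M (fun i => if (i : ℕ) < k then B i else A i)).toOuterMeasure U := by
      intro k hk
      induction k with
      | zero => simp
      | succ m ih =>
        have hm : m ≤ n := Nat.le_of_succ_le hk
        have hmn : m < n := hk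
        calc (M A).toOuterMeasure U
            ≤ e ^ m * (M (fun i => if (i:ℕ) < m then B i else A i)).toOuterMeasure U :=
              ih hm
          _ ≤ e ^ m * (e *
              (M (fun i => if (i:ℕ) < m+1 then B i else A i)).toOuterMeasure U) := by
              refine mul_le_mul_right ?_ _
              refine hDP _ _ ⟨⟨m, hmn⟩, ?_⟩ U
              intro i hi
              have hne : (i:ℕ) ≠ m := by simpa [Fin.ext_iff] using hi
              by_cases h1 : (i:ℕ) < m
              · simp [h1, Nat.lt_succ_of_lt h1]
              · have h2 : ¬ (i:ℕ) < m+1 := by omega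
                simp [h1, h2]
          _ = e ^ (m+1) *
              (M (fun i => if (i:ℕ) < m+1 then B i else A i)).toOuterMeasure U := by
              ring
    have hfun : (fun i : Fin n => if (i:ℕ) < n then B i else A i) = B :=
      funext fun i => if_pos i.is_lt
    have := key n le_rfl
    rwa [hfun] at this
  rcases Nat.eq_zero_or_pos N with hN | hN
  · subst hN
    have h2 : 0 ≤ Real.log 2 / ε := div_nonneg (Real.log_nonneg one_le_two) hε.le
    have hn : (0:ℝ) ≤ (n:ℝ) := Nat.cast_nonneg n
    simp only [Nat.cast_zero, Real.log_zero, zero_div]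
    linarith
  · set i₀ : Fin N := ⟨0, hN⟩
    set p : PMF Y := M (S i₀) with hp
    -- sum of measures of disjoint sets ≤ 1
    have hmeas : ∀ s : Set Y, MeasurableSet s := fun s => trivial
    have hsum1 : ∑ i : Fin N, p.toOuterMeasure (T i) ≤ 1 := by
      have heq : ∀ i, p.toOuterMeasure (T i) = p.toMeasure (T i) := fun i =>
        (PMF.toMeasure_apply_eq_toOuterMeasure_apply p (s := T i) (hmeas _)).symm
      simp only [heq]
      have : ∑ i : Fin N, p.toMeasure (T i) = p.toMeasure (⋃ i, T i) := by
        rw [MeasureTheory.measure_iUnion hdisj (fun i => hmeas _), tsum_fintype]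
      rw [this]
      exact (MeasureTheory.measure_mono (Set.subset_univ _)).trans_eq (by simp)
    have hle : ∀ i : Fin N, (1:ENNReal)/2 ≤ e ^ n * p.toOuterMeasure (T i) := fun i =>
      (hacc i).trans (hgroup (S i) (S i₀) (T i))
    have hNsum : (N : ENNReal) * (1/2) ≤ e ^ n := by
      calc (N : ENNReal) * (1/2) = ∑ _i : Fin N, (1:ENNReal)/2 := by
            simp [Finset.sum_const, mul_comm]
        _ ≤ ∑ i : Fin N, e ^ n * p.toOuterMeasure (T i) := Finset.sum_le_sum fun i _ => hle i
        _ = e ^ n * ∑ i : Fin N, p.toOuterMeasure (T i) := by rw [Finset.mul_sum]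
        _ ≤ e ^ n * 1 := mul_le_mul_right hsum1 _
        _ = e ^ n := mul_one _
    -- to reals
    have hepow : e ^ n = ENNReal.ofReal (Real.exp ε ^ n) := by
      rw [he, ENNReal.ofReal_pow (Real.exp_pos ε).le]
    have hNle : (N : ℝ) ≤ 2 * Real.exp ε ^ n := by
      have hhalf : (1:ENNReal)/2 * 2 = 1 :=
        ENNReal.div_mul_cancel (by norm_num) (by norm_num)
      have h2 : (N : ENNReal) ≤ 2 * e ^ n := by
        calc (N:ENNReal) = (N * (1/2)) * 2 := by rw [mul_assoc, hhalf, mul_one]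
          _ ≤ e ^ n * 2 := mul_le_mul_left hNsum 2
          _ = 2 * e ^ n := mul_comm _ _
      rw [hepow, show ((2:ENNReal)) = ENNReal.ofReal 2 by norm_num,
        ← ENNReal.ofReal_mul (by norm_num), show ((N:ENNReal)) = ENNReal.ofReal (N:ℝ) by
          simp [ENNReal.ofReal_natCast]] at h2
      exact (ENNReal.ofReal_le_ofReal_iff (by positivity)).mp h2
    have hlog : Real.log N ≤ Real.log 2 + (n:ℝ) * ε := by
      have hNpos : (0:ℝ) < N := by exact_mod_cast hN
      calc Real.log N ≤ Real.log (2 * Real.exp ε ^ n) :=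
            Real.log_le_log hNpos hNle
        _ = Real.log 2 + Real.log (Real.exp ε ^ n) := by
            rw [Real.log_mul (by norm_num) (by positivity)]
        _ = Real.log 2 + (n:ℝ) * ε := by
            rw [Real.log_pow, Real.log_exp]
    rw [div_sub_div_same, div_le_iff₀ hε]
    linarith
end

section
/- Every (ε,0)-differentially private PAC k-learner for a concept class C containing at least two distinct concepts, with accuracy parameters α < 1 and β = 1/2, requires sample complexity n = Ω(k/ε). Specifically, n ≥ (k·ln 2 − ln 2)/ε. -/
open MeasureTheory


lemma lintegral_dirac_le' {α : Type*} [MeasurableSpace α] (a : α) (f : α → ENNReal) :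
    ∫⁻ x, f x ∂(Measure.dirac a) ≤ f a := by
  rw [lintegral_def]
  refine iSup₂_le fun g hg => ?_
  have : g.lintegral (Measure.dirac a) = ∫⁻ x, g x ∂(Measure.dirac a) :=
    (g.lintegral_eq_lintegral _).symm
  rw [this, lintegral_dirac' a g.measurable]
  exact hg a

lemma pi_dirac_eq' {ι : Type*} [Fintype ι] {α : ι → Type*} [∀ i, MeasurableSpace (α i)]
    (a : ∀ i, α i) :
    Measure.pi (fun i => Measure.dirac (a i)) = Measure.dirac a := by
  refine (Measure.pi_eq (μ := fun i => Measure.dirac (a i)) (μ' := Measure.dirac a) fun s hs => ?_)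
  classical
  rw [Measure.dirac_apply' _ (MeasurableSet.univ_pi hs)]
  by_cases h : a ∈ Set.univ.pi s
  · rw [Set.indicator_of_mem h]
    have : ∀ i, Measure.dirac (a i) (s i) = 1 := by
      intro i
      rw [Measure.dirac_apply' _ (hs i), Set.indicator_of_mem (h i (Set.mem_univ i))]; rfl
    simp [this]
  · rw [Set.indicator_of_notMem h]
    simp only [Set.mem_pi, Set.mem_univ, forall_true_left] at h
    push_neg at h
    obtain ⟨i, hi⟩ := h
    have : Measure.dirac (a i) (s i) = 0 := by
      rw [Measure.dirac_apply' _ (hs i), Set.indicator_of_notMem hi]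
    exact (Finset.prod_eq_zero (Finset.mem_univ i) this).symm

/-- Packing lower bound for private PAC multi-learning: every `(ε,0)`-differentially
private PAC `k`-learner with accuracy `α < 1` and confidence `β = 1/2` for a concept
class `C` containing two concepts disagreeing at some point requires sample complexity
`n ≥ (k·ln 2 − ln 2)/ε`. -/
theorem private_multilearner_pure_lower_bound
    {X : Type*} [MeasurableSpace X] (C : Set (X → Bool))
    (f g : X → Bool) (hf : f ∈ C) (hg : g ∈ C) (x₀ : X) (hfg : f x₀ ≠ g x₀)
    (k n : ℕ) (α ε : ℝ) (hα : 0 ≤ α) (hα1 : α < 1) (hε : 0 < ε)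
    (A : (Fin n → X × (Fin k → Bool)) → PMF (Fin k → (X → Bool)))
    -- (ε,0)-differential privacy with respect to changing one row:
    (hDP : ∀ S S' : Fin n → X × (Fin k → Bool),
      (∃ i₀ : Fin n, ∀ i : Fin n, i ≠ i₀ → S i = S' i) →
      ∀ T : Set (Fin k → (X → Bool)),
        (A S).toOuterMeasure T ≤ ENNReal.ofReal (Real.exp ε) * (A S').toOuterMeasure T)
    -- utility: for every distribution `D` and targets `c j ∈ C`, with probability at
    -- least `1 − β = 1/2` over an i.i.d. sample and the learner's coins, every output
    -- hypothesis `h j` has `error_D(c j, h j) ≤ α`: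
    (hUtility : ∀ (D : Measure X) [IsProbabilityMeasure D],
      ∀ c : Fin k → (X → Bool), (∀ j, c j ∈ C) →
      (1 : ENNReal) / 2 ≤
        ∫⁻ xs, (A (fun i => (xs i, fun j => c j (xs i)))).toOuterMeasure
            {h : Fin k → (X → Bool) |
              ∀ j, D {x | h j x ≠ c j x} ≤ ENNReal.ofReal α}
          ∂(Measure.pi (fun _ : Fin n => D))) :
    ((k : ℝ) * Real.log 2 - Real.log 2) / ε ≤ (n : ℝ) := by
  classical
  -- group privacy
  have group : ∀ (t : ℕ) (S S' : Fin n → X × (Fin k → Bool)),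
      (∀ i : Fin n, t ≤ (i : ℕ) → S i = S' i) →
      ∀ T : Set (Fin k → (X → Bool)),
        (A S).toOuterMeasure T ≤ ENNReal.ofReal (Real.exp (t * ε)) * (A S').toOuterMeasure T := by
    intro t
    induction t with
    | zero =>
      intro S S' h T
      have hSS : S = S' := funext fun i => h i (Nat.zero_le _)
      subst hSS
      simp
    | succ t ih =>
      intro S S' h T
      by_cases ht : t < n
      · set i₀ : Fin n := ⟨t, ht⟩ with hi₀
        set S'' : Fin n → X × (Fin k → Bool) := fun i => if i = i₀ then S i else S' i with hS''
        have h1 : ∀ i : Fin n, t ≤ (i : ℕ) → S i = S'' i := by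
          intro i hi
          by_cases hit : i = i₀
          · simp [hS'', hit]
          · have hlt : t + 1 ≤ (i : ℕ) := by
              rcases lt_or_eq_of_le hi with h' | h'
              · exact h'
              · exact absurd (Fin.ext h'.symm) hit
            simp [hS'', hit, h i hlt]
        have h2 : ∀ i : Fin n, i ≠ i₀ → S'' i = S' i := fun i hi => by simp [hS'', hi]
        calc (A S).toOuterMeasure T
            ≤ ENNReal.ofReal (Real.exp (t * ε)) * (A S'').toOuterMeasure T := ih S S'' h1 T
          _ ≤ ENNReal.ofReal (Real.exp (t * ε)) *
              (ENNReal.ofReal (Real.exp ε) * (A S').toOuterMeasure T) :=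
              mul_le_mul_right (hDP S'' S' ⟨i₀, h2⟩ T) _
          _ = ENNReal.ofReal (Real.exp ((t + 1 : ℕ) * ε)) * (A S').toOuterMeasure T := by
              rw [← mul_assoc, ← ENNReal.ofReal_mul (Real.exp_nonneg _), ← Real.exp_add]
              push_cast
              ring_nf
      · have h0 : ∀ i : Fin n, t ≤ (i : ℕ) → S i = S' i := by
          intro i hi
          exact absurd (lt_of_le_of_lt hi i.isLt) (by omega)
        refine (ih S S' h0 T).trans (mul_le_mul_left ?_ _)
        refine ENNReal.ofReal_le_ofReal (Real.exp_le_exp.mpr ?_)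
        have : (t : ℝ) ≤ (t + 1 : ℕ) := by push_cast; linarith
        nlinarith
  set D : Measure X := Measure.dirac x₀ with hD
  haveI : IsProbabilityMeasure D := Measure.dirac.isProbabilityMeasure
  set cb : (Fin k → Bool) → Fin k → (X → Bool) := fun b j => if b j then f else g with hcb
  have hcbC : ∀ b j, cb b j ∈ C := by
    intro b j
    by_cases hb : b j <;> simp [hcb, hb, hf, hg]
  set Sb : (Fin k → Bool) → Fin n → X × (Fin k → Bool) :=
    fun b _ => (x₀, fun j => cb b j x₀) with hSb
  set Tb : (Fin k → Bool) → Set (Fin k → (X → Bool)) :=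
    fun b => {h | ∀ j, D {x | h j x ≠ cb b j x} ≤ ENNReal.ofReal α} with hTb
  -- utility at the point mass
  have hU : ∀ b, (1 : ENNReal) / 2 ≤ (A (Sb b)).toOuterMeasure (Tb b) := by
    intro b
    have hu := hUtility D (cb b) (hcbC b)
    have hpi : Measure.pi (fun _ : Fin n => D) = Measure.dirac (fun _ : Fin n => x₀) :=
      pi_dirac_eq' (fun _ : Fin n => x₀)
    rw [hpi] at hu
    exact hu.trans (lintegral_dirac_le' _ _)
  -- membership forces labels at x₀
  have hmem : ∀ b h, h ∈ Tb b → ∀ j, h j x₀ = cb b j x₀ := by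
    intro b h hh j
    by_contra hne
    have hx : x₀ ∈ {x | h j x ≠ cb b j x} := hne
    have h1 : (1 : ENNReal) ≤ ENNReal.ofReal α := by
      have := hh j
      rwa [hD, Measure.dirac_apply_of_mem hx] at this
    have h2 : ENNReal.ofReal α < 1 := ENNReal.ofReal_lt_one.mpr hα1
    exact absurd (lt_of_le_of_lt h1 h2) (lt_irrefl _)
  -- disjointness
  have hdisj : ∀ b b' h, h ∈ Tb b → h ∈ Tb b' → b = b' := by
    intro b b' h h1 h2
    funext j
    have e1 := hmem b h h1 j
    have e2 := hmem b' h h2 j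
    have e3 : cb b j x₀ = cb b' j x₀ := by rw [← e1, ← e2]
    by_contra hbb
    cases hb : b j <;> cases hb' : b' j <;>
      simp [hcb, hb, hb'] at e3 hbb <;> [exact hfg e3.symm; exact hfg e3]
  set p : PMF (Fin k → (X → Bool)) := A (Sb (fun _ => false)) with hp
  -- packing: total mass bound
  have hsum : ∑ b : Fin k → Bool, p.toOuterMeasure (Tb b) ≤ 1 := by
    have hpt : ∀ h, ∑ b : Fin k → Bool, (Tb b).indicator p h ≤ p h := by
      intro h
      by_cases hh : ∃ b, h ∈ Tb b
      · obtain ⟨b₀, hb₀⟩ := hh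
        rw [Finset.sum_eq_single b₀]
        · rw [Set.indicator_of_mem hb₀]
        · intro b _ hb
          exact Set.indicator_of_notMem (fun hmem' => hb (hdisj b b₀ h hmem' hb₀)) _
        · intro hb; exact absurd (Finset.mem_univ b₀) hb
      · push_neg at hh
        simp [Set.indicator_of_notMem (hh _)]
    calc ∑ b : Fin k → Bool, p.toOuterMeasure (Tb b)
        = ∑ b : Fin k → Bool, ∑' h, (Tb b).indicator p h := by
          simp [PMF.toOuterMeasure_apply]
      _ = ∑' h, ∑ b : Fin k → Bool, (Tb b).indicator p h :=
          (Summable.tsum_finsetSum (fun i _ => ENNReal.summable)).symm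
      _ ≤ ∑' h, p h := ENNReal.tsum_le_tsum hpt
      _ = 1 := p.tsum_coe
  -- per labeling lower bound
  have hkey : ∀ b : Fin k → Bool,
      (1 : ENNReal) / 2 ≤ ENNReal.ofReal (Real.exp (n * ε)) * p.toOuterMeasure (Tb b) := by
    intro b
    refine (hU b).trans ?_
    refine group n (Sb b) (Sb (fun _ => false)) ?_ (Tb b)
    intro i hi
    exact absurd (lt_of_lt_of_le i.isLt hi) (lt_irrefl _)
  have htotal : (2 ^ k : ENNReal) * ((1 : ENNReal) / 2) ≤ ENNReal.ofReal (Real.exp (n * ε)) := by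
    calc (2 ^ k : ENNReal) * ((1 : ENNReal) / 2)
        = ∑ _b : Fin k → Bool, (1 : ENNReal) / 2 := by
          rw [Finset.sum_const, Finset.card_univ]
          simp [nsmul_eq_mul]
      _ ≤ ∑ b : Fin k → Bool, ENNReal.ofReal (Real.exp (n * ε)) * p.toOuterMeasure (Tb b) :=
          Finset.sum_le_sum (fun b _ => hkey b)
      _ = ENNReal.ofReal (Real.exp (n * ε)) * ∑ b : Fin k → Bool, p.toOuterMeasure (Tb b) :=
          (Finset.mul_sum _ _ _).symm
      _ ≤ ENNReal.ofReal (Real.exp (n * ε)) * 1 := mul_le_mul_right hsum _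
      _ = ENNReal.ofReal (Real.exp (n * ε)) := mul_one _
  have hreal : (2 : ℝ) ^ k ≤ 2 * Real.exp (n * ε) := by
    have h2 : (2 ^ k : ENNReal) ≤ 2 * ENNReal.ofReal (Real.exp (n * ε)) := by
      calc (2 ^ k : ENNReal) = 2 ^ k * ((1 : ENNReal) / 2) * 2 := by
            rw [mul_assoc, one_div, ENNReal.inv_mul_cancel (by norm_num) (by norm_num),
              mul_one]
        _ ≤ ENNReal.ofReal (Real.exp (n * ε)) * 2 := mul_le_mul_left htotal _
        _ = 2 * ENNReal.ofReal (Real.exp (n * ε)) := mul_comm _ _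
    have h3 : ENNReal.ofReal ((2 : ℝ) ^ k) ≤ ENNReal.ofReal (2 * Real.exp (n * ε)) := by
      rw [ENNReal.ofReal_pow (by norm_num : (0:ℝ) ≤ 2),
        ENNReal.ofReal_mul (by norm_num : (0:ℝ) ≤ 2)]
      simpa using h2
    exact (ENNReal.ofReal_le_ofReal_iff (by positivity)).mp h3
  have hlog : (k : ℝ) * Real.log 2 ≤ Real.log 2 + n * ε := by
    have h1 : Real.log ((2 : ℝ) ^ k) ≤ Real.log (2 * Real.exp (n * ε)) :=
      Real.log_le_log (by positivity) hreal
    rwa [Real.log_pow, Real.log_mul (by norm_num) (Real.exp_ne_zero _), Real.log_exp] at h1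
  rw [div_le_iff₀ hε]
  linarith
end

section
/- Every (ε,0)-differentially private PAC k-learner for parities PAR_d under the uniform distribution with α < 1/4 and β = 1/2 requires sample complexity n = Ω(kd/ε). Specifically, n ≥ (kd·ln 2 − ln 2)/ε. -/
open scoped ENNReal

/-- The parity function determined by `x`. -/
def parityFn {d : ℕ} (x : Fin d → ZMod 2) : (Fin d → ZMod 2) → ZMod 2 :=
  fun y => ∑ i, x i * y i

lemma parityFn_add_right {d : ℕ} (z y w : Fin d → ZMod 2) :
    parityFn z (y + w) = parityFn z y + parityFn z w := by
  simp [parityFn, mul_add, Finset.sum_add_distrib]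

lemma parityFn_sub_left {d : ℕ} (x x' y : Fin d → ZMod 2) :
    parityFn (x - x') y = parityFn x y - parityFn x' y := by
  simp [parityFn, sub_mul, Finset.sum_sub_distrib]

lemma parityFn_single {d : ℕ} (z : Fin d → ZMod 2) (i : Fin d) :
    parityFn z (Pi.single i 1) = z i := by
  simp [parityFn, Pi.single_apply, mul_ite, Finset.sum_ite_eq']

lemma parity_card {d : ℕ} (z : Fin d → ZMod 2) (hz : z ≠ 0) :
    2 * (Finset.univ.filter (fun y : Fin d → ZMod 2 => parityFn z y ≠ 0)).card = 2 ^ d := by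
  classical
  obtain ⟨i, hi⟩ := Function.ne_iff.mp hz
  have hi' : z i ≠ 0 := by simpa using hi
  have hzi : z i = 1 := (by decide : ∀ a : ZMod 2, a ≠ 0 → a = 1) (z i) hi'
  set e : Fin d → ZMod 2 := Pi.single i 1 with he
  have key : ∀ y : Fin d → ZMod 2, parityFn z (y + e) = parityFn z y + 1 := by
    intro y; rw [parityFn_add_right, he, parityFn_single, hzi]
  have hee : ∀ y : Fin d → ZMod 2, y + e + e = y := by
    intro y
    have hadd : ∀ a : ZMod 2, a + a = 0 := by decide
    funext x
    simp [add_assoc, hadd (e x)]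
  have htwo : ∀ a : ZMod 2, a ≠ 0 → a = 1 := by decide
  have hbij : (Finset.univ.filter (fun y : Fin d → ZMod 2 => parityFn z y ≠ 0)).card
      = (Finset.univ.filter (fun y : Fin d → ZMod 2 => ¬ parityFn z y ≠ 0)).card := by
    refine Finset.card_bij' (fun y _ => y + e) (fun y _ => y + e) ?_ ?_ ?_ ?_
    · intro a ha
      simp only [Finset.mem_filter, Finset.mem_univ, true_and] at ha ⊢
      rw [key, htwo _ ha]
      decide
    · intro a ha
      simp only [Finset.mem_filter, Finset.mem_univ, true_and, not_not] at ha ⊢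
      rw [key, ha]
      decide
    · intro a _; exact hee a
    · intro a _; exact hee a
  have := Finset.card_filter_add_card_filter_not
    (s := (Finset.univ : Finset (Fin d → ZMod 2)))
    (p := fun y => parityFn z y ≠ 0)
  rw [← hbij] at this
  have hcard : (Finset.univ : Finset (Fin d → ZMod 2)).card = 2 ^ d := by
    simp [Finset.card_univ]
  omega

lemma good_unique {d k : ℕ} {α : ℝ} (hα1 : α < 1 / 4)
    (c c' : Fin k → (Fin d → ZMod 2)) (h : Fin k → ((Fin d → ZMod 2) → ZMod 2))
    (hc : ∀ j, ((Finset.univ.filter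
        (fun y : Fin d → ZMod 2 => h j y ≠ parityFn (c j) y)).card : ℝ) / 2 ^ d ≤ α)
    (hc' : ∀ j, ((Finset.univ.filter
        (fun y : Fin d → ZMod 2 => h j y ≠ parityFn (c' j) y)).card : ℝ) / 2 ^ d ≤ α) :
    c = c' := by
  classical
  funext j
  by_contra hne
  have hz : c j - c' j ≠ 0 := sub_ne_zero.mpr hne
  have hhalf := parity_card _ hz
  have hfilter : (Finset.univ.filter
      (fun y : Fin d → ZMod 2 => parityFn (c j - c' j) y ≠ 0))
      = (Finset.univ.filter
      (fun y : Fin d → ZMod 2 => parityFn (c j) y ≠ parityFn (c' j) y)) := by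
    apply Finset.filter_congr
    intro y _
    rw [parityFn_sub_left]
    simp [sub_ne_zero]
  rw [hfilter] at hhalf
  have hsub : (Finset.univ.filter
      (fun y : Fin d → ZMod 2 => parityFn (c j) y ≠ parityFn (c' j) y))
      ⊆ (Finset.univ.filter (fun y : Fin d → ZMod 2 => h j y ≠ parityFn (c j) y))
        ∪ (Finset.univ.filter (fun y : Fin d → ZMod 2 => h j y ≠ parityFn (c' j) y)) := by
    intro y hy
    simp only [Finset.mem_filter, Finset.mem_univ, true_and, Finset.mem_union] at hy ⊢
    by_contra hcon
    push_neg at hcon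
    exact hy (hcon.1.symm.trans hcon.2)
  have hcardle := (Finset.card_le_card hsub).trans (Finset.card_union_le _ _)
  have hP : (0:ℝ) < 2 ^ d := by positivity
  have h1 : ((Finset.univ.filter
      (fun y : Fin d → ZMod 2 => h j y ≠ parityFn (c j) y)).card : ℝ) ≤ α * 2 ^ d := by
    have := hc j; rw [div_le_iff₀ hP] at this; exact this
  have h2 : ((Finset.univ.filter
      (fun y : Fin d → ZMod 2 => h j y ≠ parityFn (c' j) y)).card : ℝ) ≤ α * 2 ^ d := by
    have := hc' j; rw [div_le_iff₀ hP] at this; exact this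
  have hcast : (2:ℝ) * ((Finset.univ.filter
      (fun y : Fin d → ZMod 2 => parityFn (c j) y ≠ parityFn (c' j) y)).card : ℝ)
      = (2:ℝ) ^ d := by
    exact_mod_cast congrArg (Nat.cast : ℕ → ℝ) hhalf
  have hcast2 : ((Finset.univ.filter
      (fun y : Fin d → ZMod 2 => parityFn (c j) y ≠ parityFn (c' j) y)).card : ℝ)
      ≤ ((Finset.univ.filter
      (fun y : Fin d → ZMod 2 => h j y ≠ parityFn (c j) y)).card : ℝ)
      + ((Finset.univ.filter
      (fun y : Fin d → ZMod 2 => h j y ≠ parityFn (c' j) y)).card : ℝ) := by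
    exact_mod_cast hcardle
  nlinarith

lemma group_privacy {Ω R : Type*} {n : ℕ} (ε : ℝ) (hε : 0 ≤ ε)
    (A : (Fin n → Ω) → PMF R)
    (hDP : ∀ S S' : Fin n → Ω, (∃ i₀ : Fin n, ∀ i : Fin n, i ≠ i₀ → S i = S' i) →
      ∀ T : Set R, (A S).toOuterMeasure T ≤ ENNReal.ofReal (Real.exp ε) * (A S').toOuterMeasure T) :
    ∀ (m : ℕ) (S S' : Fin n → Ω), (∀ i : Fin n, m ≤ i.val → S i = S' i) →
      ∀ T : Set R,
        (A S).toOuterMeasure T ≤ (ENNReal.ofReal (Real.exp ε)) ^ m * (A S').toOuterMeasure T := by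
  intro m
  induction m with
  | zero =>
    intro S S' hSS' T
    have hS : S = S' := funext fun i => hSS' i (Nat.zero_le _)
    simp [hS]
  | succ m ih =>
    intro S S' hSS' T
    have hE : 1 ≤ ENNReal.ofReal (Real.exp ε) := by
      rw [ENNReal.one_le_ofReal]; exact Real.one_le_exp hε
    by_cases hm : m < n
    · set i₀ : Fin n := ⟨m, hm⟩ with hi₀
      set Smid := Function.update S i₀ (S' i₀) with hSmid
      have h1 := hDP S Smid ⟨i₀, fun i hi => (Function.update_of_ne hi _ _).symm⟩ T
      have hmid : ∀ i : Fin n, m ≤ i.val → Smid i = S' i := by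
        intro i him
        rcases eq_or_ne i i₀ with rfl | hne
        · rw [hSmid, Function.update_self]
        · have hivm : i.val ≠ m := fun hv => hne (Fin.ext hv)
          rw [hSmid, Function.update_of_ne hne]
          exact hSS' i (by omega)
      have h2 := ih Smid S' hmid T
      calc (A S).toOuterMeasure T
          ≤ ENNReal.ofReal (Real.exp ε) * (A Smid).toOuterMeasure T := h1
        _ ≤ ENNReal.ofReal (Real.exp ε) *
            ((ENNReal.ofReal (Real.exp ε)) ^ m * (A S').toOuterMeasure T) :=
            mul_le_mul_right h2 _
        _ = (ENNReal.ofReal (Real.exp ε)) ^ (m + 1) * (A S').toOuterMeasure T := by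
            rw [pow_succ]; ring
    · have h2 := ih S S' (fun i him => absurd him (by have := i.isLt; omega)) T
      refine h2.trans (mul_le_mul_left ?_ _)
      exact pow_le_pow_right₀ hE (Nat.le_succ m)

/-- Packing lower bound for privately multi-learning parities: every
`(ε,0)`-differentially private PAC `k`-learner for `PAR_d` under the uniform
distribution with `α < 1/4` and `β = 1/2` requires sample complexity
`n ≥ (k·d·ln 2 − ln 2)/ε`. -/
theorem private_parity_multilearner_lower_bound
    (d k n : ℕ) (α ε : ℝ) (hα : 0 ≤ α) (hα1 : α < 1 / 4) (hε : 0 < ε)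
    (A : (Fin n → (Fin d → ZMod 2) × (Fin k → ZMod 2)) →
      PMF (Fin k → ((Fin d → ZMod 2) → ZMod 2)))
    -- (ε,0)-differential privacy with respect to changing one row:
    (hDP : ∀ S S' : Fin n → (Fin d → ZMod 2) × (Fin k → ZMod 2),
      (∃ i₀ : Fin n, ∀ i : Fin n, i ≠ i₀ → S i = S' i) →
      ∀ T : Set (Fin k → ((Fin d → ZMod 2) → ZMod 2)),
        (A S).toOuterMeasure T ≤ ENNReal.ofReal (Real.exp ε) * (A S').toOuterMeasure T)
    -- utility: for every tuple of target parities, with probability at least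
    -- `1 − β = 1/2` over a uniform i.i.d. sample and the learner's coins, every
    -- output hypothesis has error at most `α` under the uniform distribution:
    (hUtility : ∀ c : Fin k → (Fin d → ZMod 2),
      (1 : ENNReal) / 2 ≤
        ((PMF.uniformOfFintype (Fin n → (Fin d → ZMod 2))).bind
            (fun xs => A (fun i => (xs i, fun j => parityFn (c j) (xs i))))).toOuterMeasure
          {h : Fin k → ((Fin d → ZMod 2) → ZMod 2) |
            ∀ j, ((Finset.univ.filter
                (fun y : Fin d → ZMod 2 => h j y ≠ parityFn (c j) y)).card : ℝ)
              / 2 ^ d ≤ α}) :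
    ((k : ℝ) * d * Real.log 2 - Real.log 2) / ε ≤ (n : ℝ) := by
  classical
  have hgroup := group_privacy ε hε.le A hDP
  set E := ENNReal.ofReal (Real.exp ε) with hEdef
  set T : (Fin k → (Fin d → ZMod 2)) → Set (Fin k → ((Fin d → ZMod 2) → ZMod 2)) :=
    fun c => {h | ∀ j, ((Finset.univ.filter
        (fun y : Fin d → ZMod 2 => h j y ≠ parityFn (c j) y)).card : ℝ) / 2 ^ d ≤ α} with hT
  set S₀ : Fin n → (Fin d → ZMod 2) × (Fin k → ZMod 2) :=
    fun _ => (fun _ => 0, fun _ => 0) with hS0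
  set μ := A S₀ with hμ
  -- Step A: for every target, the output lands in `T c` w.p. ≥ e^{-nε}/2 on dataset S₀.
  have stepA : ∀ c : Fin k → (Fin d → ZMod 2),
      (1 : ℝ≥0∞) / 2 ≤ E ^ n * μ.toOuterMeasure (T c) := by
    intro c
    refine le_trans (hUtility c) ?_
    rw [PMF.toOuterMeasure_bind_apply]
    calc ∑' xs : Fin n → (Fin d → ZMod 2),
          (PMF.uniformOfFintype (Fin n → (Fin d → ZMod 2))) xs *
            (A fun i => (xs i, fun j => parityFn (c j) (xs i))).toOuterMeasure (T c)
        ≤ ∑' xs : Fin n → (Fin d → ZMod 2),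
          (PMF.uniformOfFintype (Fin n → (Fin d → ZMod 2))) xs *
            (E ^ n * μ.toOuterMeasure (T c)) := by
          refine ENNReal.tsum_le_tsum fun xs => mul_le_mul_right ?_ _
          exact hgroup n _ S₀ (fun i hi => absurd hi (Nat.not_le.mpr i.isLt)) (T c)
      _ = E ^ n * μ.toOuterMeasure (T c) := by
          rw [ENNReal.tsum_mul_right, PMF.tsum_coe, one_mul]
  -- Step B: the `T c` are pairwise disjoint, so the masses sum to at most 1.
  have stepB : ∑ c : Fin k → (Fin d → ZMod 2), μ.toOuterMeasure (T c) ≤ 1 := by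
    have hpt : ∀ h0 : Fin k → ((Fin d → ZMod 2) → ZMod 2),
        ∑ c : Fin k → (Fin d → ZMod 2), (T c).indicator ⇑μ h0 ≤ μ h0 := by
      intro h0
      by_cases hex : ∃ c, h0 ∈ T c
      · obtain ⟨c₀, hc₀⟩ := hex
        rw [Finset.sum_eq_single c₀]
        · exact Set.indicator_apply_le fun _ => le_rfl
        · intro b _ hb
          refine Set.indicator_of_notMem (fun hbmem => hb ?_) _
          exact good_unique hα1 b c₀ h0 hbmem hc₀
        · intro habs; exact absurd (Finset.mem_univ c₀) habs
      · push_neg at hex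
        rw [Finset.sum_eq_zero fun c _ => Set.indicator_of_notMem (hex c) _]
        exact zero_le
    calc ∑ c : Fin k → (Fin d → ZMod 2), μ.toOuterMeasure (T c)
        = ∑ c : Fin k → (Fin d → ZMod 2), ∑' h0, (T c).indicator ⇑μ h0 :=
          Finset.sum_congr rfl fun c _ => μ.toOuterMeasure_apply (T c)
      _ = ∑' h0, ∑ c : Fin k → (Fin d → ZMod 2), (T c).indicator ⇑μ h0 :=
          (Summable.tsum_finsetSum fun _ _ => ENNReal.summable).symm
      _ ≤ ∑' h0, μ h0 := ENNReal.tsum_le_tsum hpt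
      _ = 1 := μ.tsum_coe
  -- Packing: 2^{dk}/2 ≤ E^n.
  have card_eq : Fintype.card (Fin k → (Fin d → ZMod 2)) = 2 ^ (d * k) := by
    simp [← pow_mul]
  have key : (2 : ℝ≥0∞) ^ (d * k) / 2 ≤ E ^ n := by
    have e1 : ((2 : ℝ≥0∞) ^ (d * k)) * (1 / 2)
        = ∑ _c : Fin k → (Fin d → ZMod 2), (1 : ℝ≥0∞) / 2 := by
      rw [Finset.sum_const, Finset.card_univ, card_eq, nsmul_eq_mul]
      push_cast
      ring
    have e2 : ∑ _c : Fin k → (Fin d → ZMod 2), (1 : ℝ≥0∞) / 2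
        ≤ ∑ c : Fin k → (Fin d → ZMod 2), E ^ n * μ.toOuterMeasure (T c) :=
      Finset.sum_le_sum fun c _ => stepA c
    have e3 : ∑ c : Fin k → (Fin d → ZMod 2), E ^ n * μ.toOuterMeasure (T c)
        ≤ E ^ n := by
      rw [← Finset.mul_sum]
      calc E ^ n * ∑ c : Fin k → (Fin d → ZMod 2), μ.toOuterMeasure (T c)
          ≤ E ^ n * 1 := mul_le_mul_right stepB _
        _ = E ^ n := mul_one _
    rw [div_eq_mul_inv, ← one_div]
    exact e1.le.trans (e2.trans e3)
  have hEn : E ^ n = ENNReal.ofReal (Real.exp (n * ε)) := by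
    rw [hEdef, ← ENNReal.ofReal_pow (Real.exp_nonneg _), ← Real.exp_nat_mul]
  have hL : (2 : ℝ≥0∞) ^ (d * k) / 2 = ENNReal.ofReal ((2 : ℝ) ^ (d * k) / 2) := by
    rw [ENNReal.ofReal_div_of_pos (by norm_num), ENNReal.ofReal_pow (by norm_num)]
    norm_num
  rw [hL, hEn] at key
  have key2 : ((2 : ℝ) ^ (d * k)) / 2 ≤ Real.exp (n * ε) :=
    (ENNReal.ofReal_le_ofReal_iff (Real.exp_nonneg _)).mp key
  have hlog : (d * k : ℝ) * Real.log 2 - Real.log 2 ≤ n * ε := by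
    have := Real.log_le_log (by positivity) key2
    rwa [Real.log_div (by positivity) (by norm_num), Real.log_pow, Real.log_exp,
      Nat.cast_mul] at this
  rw [div_le_iff₀ hε]
  nlinarith [hlog]
end

section
/- The Laplace mechanism is (ε,0)-differentially private: if f : X^n → ℝ has sensitivity Δ (i.e., |f(S)−f(S')| ≤ Δ for all neighboring S,S'), then the mechanism M(S) = f(S) + Lap(Δ/ε) is (ε,0)-differentially private. -/
open MeasureTheory

/-- The Laplace distribution with scale `λ`, given by density `(1/(2λ))·exp(−|z|/λ)`
with respect to Lebesgue measure. -/
noncomputable def laplaceMeasure (lam : ℝ) : Measure ℝ :=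
  (volume : Measure ℝ).withDensity
    (fun z => ENNReal.ofReal ((1 / (2 * lam)) * Real.exp (-|z| / lam)))

lemma map_laplace_apply (lam c : ℝ) {T : Set ℝ} (hT : MeasurableSet T) :
    Measure.map (fun z => c + z) (laplaceMeasure lam) T
      = ∫⁻ x in T, ENNReal.ofReal ((1 / (2 * lam)) * Real.exp (-|x - c| / lam)) := by
  rw [laplaceMeasure, Measure.map_apply (measurable_const_add c) hT,
    withDensity_apply _ (hT.preimage (measurable_const_add c)),
    ← lintegral_indicator (hT.preimage (measurable_const_add c)) _,
    ← lintegral_indicator hT _,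
    ← lintegral_add_left_eq_self (μ := (volume : Measure ℝ))
      (f := fun x => T.indicator
        (fun x => ENNReal.ofReal ((1 / (2 * lam)) * Real.exp (-|x - c| / lam))) x) c]
  congr 1
  ext z
  by_cases h : c + z ∈ T <;>
    simp [Set.indicator, Set.mem_preimage, h, add_sub_cancel_left]

/-- The Laplace mechanism is `(ε,0)`-differentially private: if `f` has sensitivity
`Δ`, then releasing `f(S) + Lap(Δ/ε)` satisfies, for all neighboring databases and
all measurable events `T`, `Pr[M(S) ∈ T] ≤ e^ε · Pr[M(S') ∈ T]`. -/
theorem laplace_mechanism_private {X : Type*} {n : ℕ}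
    (f : (Fin n → X) → ℝ) (ε Δ : ℝ) (hε : 0 < ε) (hΔ : 0 < Δ)
    (hsens : ∀ S S' : Fin n → X,
      (∃ i₀ : Fin n, ∀ i : Fin n, i ≠ i₀ → S i = S' i) → |f S - f S'| ≤ Δ) :
    ∀ S S' : Fin n → X, (∃ i₀ : Fin n, ∀ i : Fin n, i ≠ i₀ → S i = S' i) →
      ∀ T : Set ℝ, MeasurableSet T →
        Measure.map (fun z => f S + z) (laplaceMeasure (Δ / ε)) T ≤
          ENNReal.ofReal (Real.exp ε) *
            Measure.map (fun z => f S' + z) (laplaceMeasure (Δ / ε)) T := by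
  intro S S' hnb T hT
  have hlam : 0 < Δ / ε := div_pos hΔ hε
  rw [map_laplace_apply _ _ hT, map_laplace_apply _ _ hT, ← lintegral_const_mul']
  · apply lintegral_mono
    intro x
    beta_reduce
    rw [← ENNReal.ofReal_mul (Real.exp_nonneg ε)]
    apply ENNReal.ofReal_le_ofReal
    rw [mul_comm (Real.exp ε), mul_assoc]
    apply mul_le_mul_of_nonneg_left _ (by positivity)
    rw [← Real.exp_add]
    apply Real.exp_le_exp.mpr
    have hsub : |x - f S'| - |x - f S| ≤ Δ := by
      have h1 : |x - f S'| ≤ |x - f S| + |f S - f S'| := by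
        have := abs_sub_abs_le_abs_sub (x - f S') (x - f S)
        have h2 := abs_sub (x - f S') (x - f S)
        calc |x - f S'| ≤ |x - f S| + |(x - f S') - (x - f S)| := by
              have := abs_add_le ((x - f S') - (x - f S)) (x - f S)
              simpa [sub_add_cancel] using (abs_add_le (x - f S) ((x - f S') - (x - f S))).trans_eq' (by ring_nf)
          _ = |x - f S| + |f S - f S'| := by ring_nf
      linarith [hsens S S' hnb]
    have key : (|x - f S'| - |x - f S|) / (Δ / ε) ≤ ε := by
      rw [div_le_iff₀ hlam, mul_comm, div_mul_cancel₀ _ hε.ne']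
      exact hsub
    rw [sub_div] at key
    rw [neg_div, neg_div]
    linarith
  · exact ENNReal.ofReal_ne_top
end

section
/- Accuracy of the point-function sanitizer: the per-query Laplace-with-thresholding mechanism of Algorithm 1 is α-accurate for all point queries simultaneously with probability at least 1−β, provided n ≥ (4/(αε))·ln(4/(αβ)). That is, with probability ≥ 1−β, every released answer a_x satisfies |a_x − c_x(D)| ≤ α. -/
open MeasureTheory

/-- The empirical frequency of the point `x` in the database `D`. -/
noncomputable def pointFreq {X : Type*} [Fintype X] [DecidableEq X] {n : ℕ}
    (D : Fin n → X) (x : X) : ℝ :=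
  ((Finset.univ.filter (fun i => D i = x)).card : ℝ) / n

/-- The released answer of the thresholded-Laplace point sanitizer for query `x`,
given noise vector `ω`. -/
noncomputable def pointAnswer {X : Type*} [Fintype X] [DecidableEq X] {n : ℕ}
    (α : ℝ) (D : Fin n → X) (x : X) (ω : X → ℝ) : ℝ :=
  if pointFreq D x ≤ α / 4 then 0
  else if pointFreq D x + ω x ≤ α / 2 then 0
  else pointFreq D x + ω x

section LaplaceAux
open Real Set

lemma laplace_density_measurable (lam : ℝ) :
    Measurable (fun z : ℝ => ENNReal.ofReal ((1 / (2 * lam)) * Real.exp (-|z| / lam))) := by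
  fun_prop

lemma laplace_tail_Ioi {lam t : ℝ} (hlam : 0 < lam) (ht : 0 ≤ t) :
    ∫⁻ z in Ioi t, ENNReal.ofReal ((1 / (2 * lam)) * Real.exp (-|z| / lam))
      = ENNReal.ofReal ((1 / 2) * Real.exp (-t / lam)) := by
  rw [setLIntegral_congr_fun (g := fun z => ENNReal.ofReal ((1 / (2 * lam)) * Real.exp (-(1/lam) * z)))
    measurableSet_Ioi (fun z hz => by
      rw [abs_of_pos (lt_of_le_of_lt ht hz)]
      congr 2
      ring)]
  have hint : IntegrableOn (fun z : ℝ => (1 / (2 * lam)) * Real.exp (-(1/lam) * z)) (Ioi t) :=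
    (exp_neg_integrableOn_Ioi t (by positivity)).const_mul _
  rw [← ofReal_integral_eq_lintegral_ofReal hint (ae_of_all _ fun z => by positivity)]
  congr 1
  rw [integral_const_mul]
  have h := integral_comp_mul_left_Ioi (fun x => Real.exp (-x)) t (b := 1/lam) (by positivity)
  simp only [neg_mul] at h ⊢
  rw [h, integral_exp_neg_Ioi]
  rw [smul_eq_mul]
  rw [show -(1/lam*t) = -t/lam by ring]
  field_simp

lemma laplace_tail_Iio {lam t : ℝ} (hlam : 0 < lam) (ht : 0 ≤ t) :
    ∫⁻ z in Iio (-t), ENNReal.ofReal ((1 / (2 * lam)) * Real.exp (-|z| / lam))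
      = ENNReal.ofReal ((1 / 2) * Real.exp (-t / lam)) := by
  have hmap : (volume : Measure ℝ) = Measure.map Neg.neg volume :=
    (Measure.measurePreserving_neg _).map_eq.symm
  rw [hmap, setLIntegral_map measurableSet_Iio (laplace_density_measurable lam) measurable_neg]
  have hpre : (Neg.neg ⁻¹' Iio (-t) : Set ℝ) = Ioi t := by
    ext z; simp [neg_lt_neg_iff, lt_neg]
  rw [hpre]
  simp only [abs_neg]
  exact laplace_tail_Ioi hlam ht

lemma laplace_univ {lam : ℝ} (hlam : 0 < lam) : laplaceMeasure lam Set.univ = 1 := by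
  rw [laplaceMeasure, withDensity_apply _ MeasurableSet.univ, Measure.restrict_univ,
    ← lintegral_add_compl _ (measurableSet_Ioi (a := (0:ℝ)))]
  rw [compl_Ioi]
  have h1 : ∫⁻ z in Iic (0:ℝ), ENNReal.ofReal ((1 / (2 * lam)) * Real.exp (-|z| / lam))
      = ∫⁻ z in Iio (-(0:ℝ)), ENNReal.ofReal ((1 / (2 * lam)) * Real.exp (-|z| / lam)) := by
    rw [neg_zero, Measure.restrict_congr_set Iio_ae_eq_Iic.symm]
  rw [h1, laplace_tail_Iio hlam le_rfl, laplace_tail_Ioi hlam le_rfl]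
  rw [← ENNReal.ofReal_add (by positivity) (by positivity)]
  norm_num

lemma laplace_tail_bound {lam t : ℝ} (hlam : 0 < lam) (ht : 0 ≤ t) :
    laplaceMeasure lam {z : ℝ | t < |z|} ≤ ENNReal.ofReal (Real.exp (-t / lam)) := by
  have hset : {z : ℝ | t < |z|} = Ioi t ∪ Iio (-t) := by
    ext z
    simp only [mem_setOf_eq, lt_abs, mem_union, mem_Ioi, mem_Iio, lt_neg]
  rw [hset]
  refine le_trans (measure_union_le _ _) ?_
  rw [laplaceMeasure, withDensity_apply _ measurableSet_Ioi,
    withDensity_apply _ measurableSet_Iio, laplace_tail_Ioi hlam ht, laplace_tail_Iio hlam ht,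
    ← ENNReal.ofReal_add (by positivity) (by positivity)]
  apply ENNReal.ofReal_le_ofReal
  linarith

lemma laplace_abs_le {lam t : ℝ} (hlam : 0 < lam) (ht : 0 ≤ t) :
    ENNReal.ofReal (1 - Real.exp (-t / lam)) ≤ laplaceMeasure lam {z : ℝ | |z| ≤ t} := by
  have hmeas : MeasurableSet {z : ℝ | t < |z|} :=
    (isOpen_lt continuous_const continuous_abs).measurableSet
  have hcompl : {z : ℝ | |z| ≤ t} = {z : ℝ | t < |z|}ᶜ := by
    ext z; simp [not_lt]
  rw [hcompl, measure_compl hmeas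
    (ne_top_of_le_ne_top ENNReal.ofReal_ne_top (laplace_tail_bound hlam ht)),
    laplace_univ hlam]
  rw [ENNReal.ofReal_sub _ (Real.exp_nonneg _), ENNReal.ofReal_one]
  exact tsub_le_tsub_left (laplace_tail_bound hlam ht) 1

end LaplaceAux

open Real Set in
/-- Accuracy of the point-function sanitizer: if `n ≥ (4/(αε))·ln(4/(αβ))`, then with
probability at least `1 − β` over the independent Laplace noises `Lap(2/(εn))`, every
released answer `a_x` satisfies `|a_x − c_x(D)| ≤ α`. -/
theorem point_sanitizer_accuracy {X : Type*} [Fintype X] [DecidableEq X] {n : ℕ}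
    (hn : 0 < n) (D : Fin n → X) (α β ε : ℝ)
    (hα : 0 < α) (hβ : 0 < β) (hβ1 : β < 1) (hε : 0 < ε)
    (hsamp : (4 / (α * ε)) * Real.log (4 / (α * β)) ≤ (n : ℝ)) :
    ENNReal.ofReal (1 - β) ≤
      Measure.pi (fun _ : X => laplaceMeasure (2 / (ε * n)))
        {ω : X → ℝ | ∀ x : X, |pointAnswer α D x ω - pointFreq D x| ≤ α} := by

  have hnR : (0:ℝ) < n := Nat.cast_pos.mpr hn
  set lam : ℝ := 2 / (ε * n) with hlamdef
  have hlam : 0 < lam := by positivity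
  haveI : IsProbabilityMeasure (laplaceMeasure lam) := ⟨laplace_univ hlam⟩
  have hfreq_nonneg : ∀ x, 0 ≤ pointFreq D x := fun x => by unfold pointFreq; positivity
  have hsum : ∑ x : X, pointFreq D x = 1 := by
    unfold pointFreq
    rw [← Finset.sum_div, ← Nat.cast_sum,
      ← Finset.card_eq_sum_card_fiberwise (fun i (_ : i ∈ Finset.univ) => Finset.mem_univ (D i)),
      Finset.card_univ, Fintype.card_fin]
    field_simp
  set p : ℝ := Real.exp (-(α/2) / lam) with hpdef
  have hp0 : 0 ≤ p := Real.exp_nonneg _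
  have hp1 : p ≤ 1 := Real.exp_le_one_iff.mpr
    (div_nonpos_of_nonpos_of_nonneg (by linarith) hlam.le)
  have hpβ : p ≤ α * β / 4 := by
    have h2 : (0:ℝ) < α * ε := by positivity
    have h1 : Real.log (4/(α*β)) ≤ α * ε * n / 4 := by
      have h3 := mul_le_mul_of_nonneg_left hsamp (le_of_lt (show (0:ℝ) < α*ε/4 by positivity))
      have h4 : α*ε/4 * (4/(α*ε) * Real.log (4/(α*β))) = Real.log (4/(α*β)) := by
        field_simp
      rw [h4] at h3
      linarith
    have h3 : -(α/2)/lam = -(α*ε*n/4) := by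
      rw [hlamdef]; field_simp; ring
    rw [hpdef, h3]
    calc Real.exp (-(α*ε*↑n/4)) ≤ Real.exp (-(Real.log (4/(α*β)))) :=
          Real.exp_le_exp.mpr (by linarith)
    _ = (4/(α*β))⁻¹ := by rw [Real.exp_neg, Real.exp_log (by positivity)]
    _ = α*β/4 := by rw [inv_div]
  classical
  set H := Finset.univ.filter (fun x : X => ¬ pointFreq D x ≤ α/4) with hHdef
  set m := H.card with hmdef
  have hm : (m:ℝ) ≤ 4/α := by
    have h4 : (m:ℝ) * (α/4) ≤ 1 := by
      calc (m:ℝ) * (α/4) = ∑ _x ∈ H, (α/4) := by rw [Finset.sum_const, nsmul_eq_mul]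
      _ ≤ ∑ x ∈ H, pointFreq D x := Finset.sum_le_sum (fun x hx =>
            le_of_lt (lt_of_not_ge (Finset.mem_filter.mp hx).2))
      _ ≤ ∑ x : X, pointFreq D x := Finset.sum_le_sum_of_subset_of_nonneg
            (Finset.subset_univ H) (fun x _ _ => hfreq_nonneg x)
      _ = 1 := hsum
    rw [le_div_iff₀ hα]
    nlinarith
  have hmp : (m:ℝ) * p ≤ β := by
    calc (m:ℝ)*p ≤ (4/α)*(α*β/4) := mul_le_mul hm hpβ hp0 (by positivity)
    _ = β := by field_simp
  have hreal : 1 - β ≤ (1-p)^m := by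
    have hb := one_add_mul_le_pow (a := -p) (by linarith) m
    calc 1 - β ≤ 1 - m*p := by linarith
    _ = 1 + m * (-p) := by ring
    _ ≤ (1 + -p)^m := hb
    _ = (1-p)^m := by ring_nf
  set A : X → Set ℝ := fun x => if pointFreq D x ≤ α/4 then Set.univ else {z : ℝ | |z| ≤ α/2}
    with hAdef
  have hsubset : Set.univ.pi A ⊆
      {ω : X → ℝ | ∀ x : X, |pointAnswer α D x ω - pointFreq D x| ≤ α} := by
    intro ω hω x
    have hωx := hω x (Set.mem_univ x)
    unfold pointAnswer
    by_cases hc : pointFreq D x ≤ α/4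
    · rw [if_pos hc, zero_sub, abs_neg, abs_of_nonneg (hfreq_nonneg x)]
      linarith
    · rw [if_neg hc]
      have hωx' : |ω x| ≤ α/2 := by
        simp only [hAdef, if_neg hc, mem_setOf_eq] at hωx
        exact hωx
      rw [abs_le] at hωx'
      by_cases hc2 : pointFreq D x + ω x ≤ α/2
      · rw [if_pos hc2, zero_sub, abs_neg, abs_of_nonneg (hfreq_nonneg x)]
        linarith
      · rw [if_neg hc2, add_sub_cancel_left, abs_le]
        constructor <;> linarith
  refine le_trans ?_ (measure_mono hsubset)
  rw [Measure.pi_pi]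
  have hA : ∀ x : X, laplaceMeasure lam (A x)
      = if pointFreq D x ≤ α/4 then 1 else laplaceMeasure lam {z : ℝ | |z| ≤ α/2} := by
    intro x
    simp only [hAdef]
    split_ifs with h
    · exact laplace_univ hlam
    · rfl
  calc ENNReal.ofReal (1-β) ≤ ENNReal.ofReal ((1-p)^m) := ENNReal.ofReal_le_ofReal hreal
  _ = (ENNReal.ofReal (1-p))^m := ENNReal.ofReal_pow (by linarith) m
  _ ≤ (laplaceMeasure lam {z : ℝ | |z| ≤ α/2})^m :=
      pow_le_pow_left₀ zero_le (laplace_abs_le hlam (by positivity)) m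
  _ = ∏ x : X, laplaceMeasure lam (A x) := by
      rw [Finset.prod_congr rfl (fun x _ => hA x), Finset.prod_ite, Finset.prod_const_one,
        one_mul, Finset.prod_const]
end
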